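/- With X^Λ as above and k(Λ) ≥ Λ²(Λ+1)², the largest eigenvalue α₁(Λ) of X^Λ satisfies α₁(Λ) ≥ 1 − π²/(8(Λ+1)²) for all Λ ∈ ℕ, and α₁(Λ) → 1 as Λ → ∞. -/

import Mathlib

/-- `b_m = √(1 + m(m-1)/k)`. -/
noncomputable def bcoef (k : ℝ) (m : ℤ) : ℝ := Real.sqrt (1 + (m * (m - 1)) / k)

/-- The matrix of the coordinate `x₁` on the fuzzy circle `S¹_Λ`. -/
noncomputable def XLam (Λ : ℕ) (k : ℝ) : Matrix (Fin (2*Λ+1)) (Fin (2*Λ+1)) ℝ :=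
  fun i j =>
    if (i : ℕ) + 1 = j then bcoef k ((Λ : ℤ) - (i : ℕ)) / 2
    else if (j : ℕ) + 1 = i then bcoef k ((Λ : ℤ) - (j : ℕ)) / 2
    else 0

section Aux
open Finset Real Matrix

lemma tridiag_sum (N : ℕ) (g : ℕ → ℕ → ℝ)
    (hg : ∀ p q, p + 1 ≠ q → q + 1 ≠ p → g p q = 0) :
    ∑ p ∈ range N, ∑ q ∈ range N, g p q
      = ∑ n ∈ range (N - 1), (g n (n+1) + g (n+1) n) := by
  induction N with
  | zero => simp
  | succ N ih =>
    have key : ∑ p ∈ range (N+1), ∑ q ∈ range (N+1), g p q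
        = (∑ p ∈ range N, ∑ q ∈ range N, g p q) + ((∑ p ∈ range N, g p N)
          + ((∑ q ∈ range N, g N q) + g N N)) := by
      rw [sum_range_succ, sum_range_succ (f := fun q => g N q)]
      simp_rw [sum_range_succ (n := N)]
      rw [Finset.sum_add_distrib]
      ring
    rcases Nat.eq_zero_or_pos N with h0 | hpos
    · subst h0; simp [hg 0 0 (by omega) (by omega)]
    · obtain ⟨m, rfl⟩ : ∃ m, N = m + 1 := ⟨N - 1, by omega⟩
      have e1 : ∑ p ∈ range (m+1), g p (m+1) = g m (m+1) :=
        Finset.sum_eq_single_of_mem m (by simp)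
          (fun p hp hne => hg p (m+1) (by omega) (by simp at hp; omega))
      have e2 : ∑ q ∈ range (m+1), g (m+1) q = g (m+1) m :=
        Finset.sum_eq_single_of_mem m (by simp)
          (fun q hq hne => hg (m+1) q (by simp at hq; omega) (by omega))
      have e3 : g (m+1) (m+1) = 0 := hg _ _ (by omega) (by omega)
      rw [key, e1, e2, e3, ih]
      have : (m + 1 + 1) - 1 = (m + 1) := rfl
      rw [this, sum_range_succ]
      norm_num

noncomputable def Xe (Λ : ℕ) (k : ℝ) (p q : ℕ) : ℝ :=
  if p + 1 = q then bcoef k ((Λ : ℤ) - p) / 2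
  else if q + 1 = p then bcoef k ((Λ : ℤ) - q) / 2 else 0

lemma XLam_eq (Λ : ℕ) (k : ℝ) (i j : Fin (2*Λ+1)) : XLam Λ k i j = Xe Λ k i j := rfl

lemma quad_eq (Λ : ℕ) (k : ℝ) (u : Fin (2*Λ+1) → ℝ) (U : ℕ → ℝ)
    (hU : ∀ (n : ℕ) (h : n < 2*Λ+1), U n = u ⟨n, h⟩) :
    u ⬝ᵥ (XLam Λ k).mulVec u
      = ∑ n ∈ range (2*Λ), bcoef k ((Λ : ℤ) - n) * (U n * U (n+1)) := by
  have hrw : u ⬝ᵥ (XLam Λ k).mulVec u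
      = ∑ p ∈ range (2*Λ+1), ∑ q ∈ range (2*Λ+1), U p * (Xe Λ k p q * U q) := by
    rw [dotProduct]
    rw [← Fin.sum_univ_eq_sum_range (fun p => ∑ q ∈ range (2*Λ+1), U p * (Xe Λ k p q * U q))]
    apply Finset.sum_congr rfl
    intro i _
    rw [Matrix.mulVec, dotProduct, Finset.mul_sum]
    rw [← Fin.sum_univ_eq_sum_range (fun q => U (i:ℕ) * (Xe Λ k (i:ℕ) q * U q))]
    apply Finset.sum_congr rfl
    intro j _
    rw [hU i i.isLt, hU j j.isLt, XLam_eq]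
  rw [hrw, tridiag_sum _ _ (fun p q h1 h2 => by simp [Xe, h1, h2])]
  have : (2*Λ+1) - 1 = 2*Λ := rfl
  rw [this]
  apply Finset.sum_congr rfl
  intro n _
  have h1 : Xe Λ k n (n+1) = bcoef k ((Λ : ℤ) - n) / 2 := if_pos rfl
  have h2 : Xe Λ k (n+1) n = bcoef k ((Λ : ℤ) - n) / 2 := by
    rw [Xe, if_neg (by omega), if_pos rfl]
  rw [h1, h2]; ring

noncomputable def wfun (Λ : ℕ) (n : ℕ) : ℝ := Real.sin ((n : ℝ) * (Real.pi / (2*Λ+2)))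

lemma wfun_zero (Λ : ℕ) : wfun Λ 0 = 0 := by simp [wfun]

lemma wfun_top (Λ : ℕ) : wfun Λ (2*Λ+2) = 0 := by
  have h : ((2*Λ+2 : ℕ) : ℝ) * (Real.pi / (2*Λ+2)) = Real.pi := by
    push_cast
    field_simp
  rw [wfun, h, Real.sin_pi]

lemma wfun_rec (Λ m : ℕ) :
    wfun Λ (m+1) * wfun Λ (m+2) + wfun Λ (m+1) * wfun Λ m
      = 2 * Real.cos (Real.pi / (2*Λ+2)) * wfun Λ (m+1)^2 := by
  set θ := Real.pi / (2*Λ+2) with hθ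
  have e1 : ((m+2 : ℕ) : ℝ) * θ = ((m+1 : ℕ) : ℝ) * θ + θ := by push_cast; ring
  have e2 : ((m : ℕ) : ℝ) * θ = ((m+1 : ℕ) : ℝ) * θ - θ := by push_cast; ring
  rw [wfun, wfun, wfun, e1, e2, Real.sin_add, Real.sin_sub]
  ring

lemma trig_main (Λ : ℕ) :
    ∑ n ∈ range (2*Λ), wfun Λ (n+1) * wfun Λ (n+2)
      = Real.cos (Real.pi / (2*Λ+2)) * ∑ n ∈ range (2*Λ+1), wfun Λ (n+1)^2 := by
  set θ := Real.pi / (2*Λ+2) with hθ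
  set w := wfun Λ with hw
  set N := 2*Λ+1 with hN
  have hA : (∑ n ∈ range (N+1), w n * w (n+1)) + (∑ n ∈ range (N+1), w n * w (n-1))
      = 2 * Real.cos θ * ∑ n ∈ range (N+1), w n ^ 2 := by
    rw [Finset.mul_sum, ← Finset.sum_add_distrib]
    apply Finset.sum_congr rfl
    intro n _
    match n with
    | 0 => simp [hw, wfun_zero]
    | (m+1) => exact wfun_rec Λ m
  have hS2 : (∑ n ∈ range (N+1), w n * w (n-1)) = ∑ n ∈ range N, w n * w (n+1) := by
    rw [Finset.sum_range_succ' (fun n => w n * w (n-1)) N]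
    simp [hw, wfun_zero, mul_comm]
  have hS1 : (∑ n ∈ range (N+1), w n * w (n+1)) = ∑ n ∈ range N, w n * w (n+1) := by
    rw [Finset.sum_range_succ]
    have : w (N+1) = 0 := by rw [hw, hN]; exact wfun_top Λ
    rw [this]; ring
  have hmain : (∑ n ∈ range N, w n * w (n+1))
      = Real.cos θ * ∑ n ∈ range (N+1), w n ^ 2 := by
    rw [hS1, hS2] at hA; linarith
  have hL : (∑ n ∈ range N, w n * w (n+1)) = ∑ n ∈ range (2*Λ), w (n+1) * w (n+2) := by
    rw [hN, Finset.sum_range_succ' (fun n => w n * w (n+1)) (2*Λ)]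
    simp [hw, wfun_zero]
  have hB : (∑ n ∈ range (N+1), w n ^ 2) = ∑ n ∈ range (2*Λ+1), w (n+1) ^ 2 := by
    rw [Finset.sum_range_succ' (fun n => w n ^ 2) N]
    simp [hw, wfun_zero, hN]
  rw [← hL, ← hB, hmain]

lemma bcoef_one_le {k : ℝ} (hk : 0 < k) (m : ℤ) : 1 ≤ bcoef k m := by
  have hm' : (0:ℤ) ≤ m * (m - 1) := by
    rcases le_or_gt m 0 with h | h
    · nlinarith [mul_nonneg (show (0:ℤ) ≤ -m by omega) (show (0:ℤ) ≤ 1 - m by omega)]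
    · exact mul_nonneg (by omega) (by omega)
  have hm : (0:ℝ) ≤ (m : ℝ) * ((m:ℝ) - 1) := by exact_mod_cast hm'
  have hd : 0 ≤ (m:ℝ) * ((m:ℝ)-1) / k := div_nonneg hm hk.le
  rw [bcoef]
  calc (1:ℝ) = Real.sqrt 1 := Real.sqrt_one.symm
  _ ≤ _ := Real.sqrt_le_sqrt (by linarith)

lemma bcoef_le {Λ : ℕ} (hΛ : 1 ≤ Λ) {k : ℝ} (hk : ((Λ:ℝ))^2 * ((Λ:ℝ)+1)^2 ≤ k)
    (m : ℤ) (hm1 : -(Λ:ℤ) ≤ m) (hm2 : m ≤ Λ) :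
    bcoef k m ≤ Real.sqrt (1 + 1/((Λ:ℝ)*((Λ:ℝ)+1))) := by
  apply Real.sqrt_le_sqrt
  have hΛR : (1:ℝ) ≤ (Λ:ℝ) := by exact_mod_cast hΛ
  have hkpos : (0:ℝ) < k := lt_of_lt_of_le (by nlinarith) hk
  have h1 : (-(Λ:ℝ)) ≤ (m:ℝ) := by exact_mod_cast hm1
  have h2 : (m:ℝ) ≤ (Λ:ℝ) := by exact_mod_cast hm2
  have hnum : ((m:ℝ)) * ((m:ℝ) - 1) ≤ (Λ:ℝ) * ((Λ:ℝ)+1) := by nlinarith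
  have key : (m:ℝ)*((m:ℝ)-1)/k ≤ 1/((Λ:ℝ)*((Λ:ℝ)+1)) := by
    have h3 : ((Λ:ℝ)*((Λ:ℝ)+1))/k ≤ 1/((Λ:ℝ)*((Λ:ℝ)+1)) := by
      rw [div_le_div_iff₀ hkpos (by nlinarith)]
      nlinarith
    calc (m:ℝ)*((m:ℝ)-1)/k ≤ ((Λ:ℝ)*((Λ:ℝ)+1))/k := by gcongr
    _ ≤ _ := h3
  linarith

lemma XLam_isHermitian (Λ : ℕ) (k : ℝ) : (XLam Λ k).IsHermitian := by
  ext i j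
  simp only [Matrix.conjTranspose_apply, XLam, star_trivial]
  split_ifs <;> first | rfl | omega

lemma hasEigenvalue_transfer {N : ℕ} (A : Matrix (Fin N) (Fin N) ℝ) (μ : ℝ)
    (h : Module.End.HasEigenvalue (Matrix.toEuclideanLin A) μ) :
    Module.End.HasEigenvalue (Matrix.toLin' A) μ := by
  obtain ⟨v, hv⟩ := h.exists_hasEigenvector
  have happ : Matrix.toEuclideanLin A v = μ • v := hv.apply_eq_smul
  refine Module.End.hasEigenvalue_of_hasEigenvector
    (x := (WithLp.equiv 2 (Fin N → ℝ)) v) ⟨?_, ?_⟩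
  · rw [Module.End.mem_eigenspace_iff, WithLp.equiv_apply, ← Matrix.piLp_ofLp_toEuclideanLin, happ]
    rfl
  · intro h0
    apply hv.2
    have := congrArg (WithLp.equiv 2 (Fin N → ℝ)).symm h0
    simpa using this

lemma quad_le (Λ : ℕ) (hΛ : 1 ≤ Λ) {k : ℝ} (hk : ((Λ:ℝ))^2 * ((Λ:ℝ)+1)^2 ≤ k)
    (u : Fin (2*Λ+1) → ℝ) :
    u ⬝ᵥ (XLam Λ k).mulVec u
      ≤ Real.sqrt (1 + 1/((Λ:ℝ)*((Λ:ℝ)+1))) * (u ⬝ᵥ u) := by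
  classical
  set bm := Real.sqrt (1 + 1/((Λ:ℝ)*((Λ:ℝ)+1))) with hbm
  set U : ℕ → ℝ := fun n => if h : n < 2*Λ+1 then u ⟨n,h⟩ else 0 with hUdef
  have hU : ∀ (n : ℕ) (h : n < 2*Λ+1), U n = u ⟨n,h⟩ := fun n h => dif_pos h
  have hS : u ⬝ᵥ u = ∑ n ∈ range (2*Λ+1), U n ^ 2 := by
    rw [dotProduct, ← Fin.sum_univ_eq_sum_range (fun n => U n ^ 2)]
    exact Finset.sum_congr rfl (fun i _ => by rw [hU i i.isLt]; simp [sq])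
  have hA1 : ∑ n ∈ range (2*Λ), U n ^ 2 ≤ ∑ n ∈ range (2*Λ+1), U n ^ 2 :=
    Finset.sum_le_sum_of_subset_of_nonneg (Finset.range_subset_range.2 (by omega))
      (fun i _ _ => sq_nonneg _)
  have hA2 : ∑ n ∈ range (2*Λ), U (n+1) ^ 2 ≤ ∑ n ∈ range (2*Λ+1), U n ^ 2 := by
    rw [Finset.sum_range_succ' (fun n => U n ^ 2) (2*Λ)]
    nlinarith [sq_nonneg (U 0)]
  rw [quad_eq Λ k u U hU, hS]
  have hterm : ∀ n ∈ range (2*Λ),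
      bcoef k ((Λ:ℤ) - n) * (U n * U (n+1)) ≤ bm * ((U n ^2 + U (n+1)^2)/2) := by
    intro n hn
    have hn' := Finset.mem_range.mp hn
    have hb0 : 0 ≤ bcoef k ((Λ:ℤ) - n) := Real.sqrt_nonneg _
    have hble : bcoef k ((Λ:ℤ) - n) ≤ bm :=
      bcoef_le hΛ hk _ (by omega) (by omega)
    nlinarith [mul_nonneg hb0 (sq_nonneg (U n - U (n+1))),
      mul_nonneg (sub_nonneg.2 hble) (add_nonneg (sq_nonneg (U n)) (sq_nonneg (U (n+1))))]
  calc ∑ n ∈ range (2*Λ), bcoef k ((Λ:ℤ) - n) * (U n * U (n+1))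
      ≤ ∑ n ∈ range (2*Λ), bm * ((U n ^2 + U (n+1)^2)/2) := Finset.sum_le_sum hterm
  _ ≤ bm * ∑ n ∈ range (2*Λ+1), U n ^ 2 := by
      have hbm0 : 0 ≤ bm := Real.sqrt_nonneg _
      have : ∑ n ∈ range (2*Λ), bm * ((U n ^2 + U (n+1)^2)/2)
          = bm/2 * ((∑ n ∈ range (2*Λ), U n ^2) + ∑ n ∈ range (2*Λ), U (n+1) ^2) := by
        rw [← Finset.sum_add_distrib, Finset.mul_sum]
        exact Finset.sum_congr rfl (fun n _ => by ring)
      rw [this]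
      nlinarith [hA1, hA2]

lemma alpha_upper (Λ : ℕ) (hΛ : 0 < Λ) {k : ℝ} (hk : ((Λ:ℝ))^2 * ((Λ:ℝ)+1)^2 ≤ k)
    {α : ℝ}
    (hα : IsGreatest {α : ℝ | Module.End.HasEigenvalue (Matrix.toLin' (XLam Λ k)) α} α) :
    α ≤ Real.sqrt (1 + 1/((Λ:ℝ)*((Λ:ℝ)+1))) := by
  obtain ⟨u, hu⟩ := hα.1.exists_hasEigenvector
  have hmv : (XLam Λ k).mulVec u = α • u := by
    rw [← Matrix.toLin'_apply]; exact hu.apply_eq_smul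
  have hSpos : 0 < u ⬝ᵥ u := by
    have hex : ∃ i, u i ≠ 0 := by
      by_contra h; push_neg at h; exact hu.2 (funext h)
    obtain ⟨i0, hi0⟩ := hex
    rw [dotProduct]
    exact Finset.sum_pos' (fun i _ => mul_self_nonneg _)
      ⟨i0, Finset.mem_univ _, mul_self_pos.mpr hi0⟩
  have hQval : u ⬝ᵥ (XLam Λ k).mulVec u = α * (u ⬝ᵥ u) := by
    rw [hmv]
    simp [dotProduct_smul, smul_eq_mul]
  have := quad_le Λ hΛ hk u
  rw [hQval] at this
  exact le_of_mul_le_mul_right (by linarith) hSpos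

lemma euclid_inner {N : ℕ} (A : Matrix (Fin N) (Fin N) ℝ) (x : EuclideanSpace ℝ (Fin N)) :
    (inner ℝ (Matrix.toEuclideanLin A x) x : ℝ)
      = (fun i => x i) ⬝ᵥ A.mulVec (fun i => x i) := by
  have h1 : ∀ i, Matrix.toEuclideanLin A x i = A.mulVec (fun j => x j) i := by
    intro i
    have h2 := congrFun (Matrix.piLp_ofLp_toEuclideanLin A x) i
    simpa [Matrix.toLin'_apply] using h2
  rw [PiLp.inner_apply, dotProduct]
  exact Finset.sum_congr rfl (fun i _ => by rw [h1 i]; simp [mul_comm])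

lemma euclid_norm_sq {N : ℕ} (x : EuclideanSpace ℝ (Fin N)) :
    ‖x‖^2 = (fun i => x i) ⬝ᵥ (fun i => x i) := by
  rw [← real_inner_self_eq_norm_sq, PiLp.inner_apply, dotProduct]
  simp [sq]

lemma alpha_lower (Λ : ℕ) (hΛ : 0 < Λ) {k : ℝ} (hk : ((Λ:ℝ))^2 * ((Λ:ℝ)+1)^2 ≤ k)
    {α : ℝ}
    (hα : IsGreatest {α : ℝ | Module.End.HasEigenvalue (Matrix.toLin' (XLam Λ k)) α} α) :
    Real.cos (Real.pi/(2*Λ+2)) ≤ α := by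
  classical
  set E := EuclideanSpace ℝ (Fin (2*Λ+1)) with hE
  haveI : Nontrivial E := by
    refine ⟨0, WithLp.toLp 2 (fun i => 1 : Fin (2*Λ+1) → ℝ), fun h => ?_⟩
    have h1 := congrArg (fun x : E => x ⟨0, by omega⟩) h
    norm_num at h1
  set T := Matrix.toEuclideanLin (XLam Λ k) with hT
  have hsym : T.IsSymmetric := Matrix.isHermitian_iff_isSymmetric.mp (XLam_isHermitian Λ k)
  set s : ℝ := ⨆ x : {x : E // x ≠ 0}, RCLike.re (inner ℝ (T x) (x:E) : ℝ) / ‖(x:E)‖^2 with hs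
  have hEV : Module.End.HasEigenvalue T s := by
    have := hsym.hasEigenvalue_iSup_of_finiteDimensional
    simpa [hs] using this
  have hαs : s ≤ α := hα.2 (hasEigenvalue_transfer _ _ hEV)
  -- the test vector
  set v : E := WithLp.toLp 2 (fun i : Fin (2*Λ+1) => wfun Λ ((i:ℕ)+1)) with hv
  have hθpos : 0 < Real.pi/(2*(Λ:ℝ)+2) := by positivity
  have hθle : Real.pi/(2*(Λ:ℝ)+2) < Real.pi := by
    have h0 : (0:ℝ) ≤ (Λ:ℝ) := Nat.cast_nonneg _
    have h1 : (1:ℝ) < 2*(Λ:ℝ)+2 := by linarith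
    exact div_lt_self Real.pi_pos (by linarith)
  have hv0 : v ≠ 0 := by
    intro h
    have h1 := congrArg (fun x : E => x ⟨0, by omega⟩) h
    have : wfun Λ 1 = 0 := by simpa [hv] using h1
    rw [wfun] at this
    have := Real.sin_pos_of_pos_of_lt_pi (by push_cast; simpa using hθpos)
      (by push_cast; simpa using hθle)
    simp [this.ne'] at *
  have hΛR : (1:ℝ) ≤ (Λ:ℝ) := by exact_mod_cast hΛ
  have hkpos : (0:ℝ) < k := lt_of_lt_of_le (by nlinarith) hk
  have hbdd : BddAbove (Set.range fun x : {x : E // x ≠ 0} =>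
      RCLike.re (inner ℝ (T x) ((x:E)) : ℝ) / ‖(x:E)‖^2) := by
    refine ⟨Real.sqrt (1 + 1/((Λ:ℝ)*((Λ:ℝ)+1))), ?_⟩
    rintro y ⟨x, rfl⟩
    have hx0 : (0:ℝ) < ‖(x:E)‖^2 := by
      have hne : (x:E) ≠ 0 := x.2
      have : 0 < ‖(x:E)‖ := norm_pos_iff.mpr hne
      positivity
    rw [div_le_iff₀ hx0]
    have hQ : RCLike.re (inner ℝ (T (x:E)) ((x:E)) : ℝ)
        = (fun i => (x:E) i) ⬝ᵥ (XLam Λ k).mulVec (fun i => (x:E) i) := by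
      rw [hT]; simpa using euclid_inner (XLam Λ k) (x:E)
    rw [hQ, euclid_norm_sq]
    exact quad_le Λ hΛ hk _
  have hvle : RCLike.re (inner ℝ (T v) (v:E) : ℝ) / ‖(v:E)‖^2 ≤ s :=
    le_ciSup hbdd (⟨v, hv0⟩ : {x : E // x ≠ 0})
  -- compute the Rayleigh quotient of v
  have hU : ∀ (n : ℕ) (h : n < 2*Λ+1),
      (fun n => wfun Λ (n+1)) n = (fun i => v i) ⟨n, h⟩ := fun n h => rfl
  have hQv : (fun i => v i) ⬝ᵥ (XLam Λ k).mulVec (fun i => v i)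
      = ∑ n ∈ range (2*Λ), bcoef k ((Λ:ℤ) - n) * (wfun Λ (n+1) * wfun Λ (n+2)) :=
    quad_eq Λ k _ (fun n => wfun Λ (n+1)) hU
  have hwnn : ∀ n : ℕ, n ≤ 2*Λ+2 → 0 ≤ wfun Λ n := by
    intro n hn
    rw [wfun]
    apply Real.sin_nonneg_of_nonneg_of_le_pi
    · positivity
    · have hc : (n:ℝ) ≤ 2*(Λ:ℝ)+2 := by exact_mod_cast hn
      have hpos : (0:ℝ) < 2*(Λ:ℝ)+2 := by linarith
      calc (n:ℝ) * (Real.pi/(2*(Λ:ℝ)+2)) ≤ (2*(Λ:ℝ)+2) * (Real.pi/(2*(Λ:ℝ)+2)) := by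
            have := Real.pi_pos; gcongr
      _ = Real.pi := by field_simp
  have hstep : ∑ n ∈ range (2*Λ), wfun Λ (n+1) * wfun Λ (n+2)
      ≤ ∑ n ∈ range (2*Λ), bcoef k ((Λ:ℤ) - n) * (wfun Λ (n+1) * wfun Λ (n+2)) := by
    apply Finset.sum_le_sum
    intro n hn
    have hn' := Finset.mem_range.mp hn
    exact le_mul_of_one_le_left
      (mul_nonneg (hwnn (n+1) (by omega)) (hwnn (n+2) (by omega)))
      (bcoef_one_le hkpos _)
  have hsin1 : 0 < wfun Λ 1 := by
    rw [wfun]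
    apply Real.sin_pos_of_pos_of_lt_pi
    · simpa using hθpos
    · simpa using hθle
  have hBpos : 0 < ∑ n ∈ range (2*Λ+1), wfun Λ (n+1) ^ 2 :=
    Finset.sum_pos' (fun n _ => sq_nonneg _)
      ⟨0, Finset.mem_range.mpr (by omega), by simpa using pow_pos hsin1 2⟩
  have hnorm : ‖(v:E)‖^2 = ∑ n ∈ range (2*Λ+1), wfun Λ (n+1) ^ 2 := by
    rw [euclid_norm_sq, dotProduct,
      ← Fin.sum_univ_eq_sum_range (fun n => wfun Λ (n+1) ^ 2)]
    exact Finset.sum_congr rfl (fun i _ => by simp [hv, sq])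
  have hQveq : RCLike.re (inner ℝ (T v) (v:E) : ℝ)
      = (fun i => v i) ⬝ᵥ (XLam Λ k).mulVec (fun i => v i) := by
    rw [hT]; simpa using euclid_inner (XLam Λ k) v
  have hray : Real.cos (Real.pi/(2*(Λ:ℝ)+2))
      ≤ RCLike.re (inner ℝ (T v) (v:E) : ℝ) / ‖(v:E)‖^2 := by
    rw [hQveq, hnorm, le_div_iff₀ hBpos, hQv]
    calc Real.cos (Real.pi/(2*(Λ:ℝ)+2)) * ∑ n ∈ range (2*Λ+1), wfun Λ (n+1) ^ 2
        = ∑ n ∈ range (2*Λ), wfun Λ (n+1) * wfun Λ (n+2) := (trig_main Λ).symm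
    _ ≤ _ := hstep
  linarith [hray, hvle, hαs]

end Aux

open Finset Real Matrix

theorem stmt_9 (k : ℕ → ℝ) (hk : ∀ Λ : ℕ, (Λ : ℝ)^2 * ((Λ : ℝ) + 1)^2 ≤ k Λ)
    (α₁ : ℕ → ℝ)
    (hα₁ : ∀ Λ : ℕ, 0 < Λ →
      IsGreatest {α : ℝ | Module.End.HasEigenvalue (Matrix.toLin' (XLam Λ (k Λ))) α} (α₁ Λ)) :
    (∀ Λ : ℕ, 0 < Λ → 1 - Real.pi ^ 2 / (8 * ((Λ : ℝ) + 1) ^ 2) ≤ α₁ Λ) ∧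
      Filter.Tendsto α₁ Filter.atTop (nhds 1) := by
  have lower : ∀ Λ : ℕ, 0 < Λ → 1 - Real.pi ^ 2 / (8 * ((Λ : ℝ) + 1) ^ 2) ≤ α₁ Λ := by
    intro Λ hΛ
    have h1 := alpha_lower Λ hΛ (hk Λ) (hα₁ Λ hΛ)
    have h2 : 1 - Real.pi ^2 / (8*((Λ:ℝ)+1)^2) ≤ Real.cos (Real.pi/(2*(Λ:ℝ)+2)) := by
      have h3 := Real.one_sub_sq_div_two_le_cos (x := Real.pi/(2*(Λ:ℝ)+2))
      have heq : (Real.pi/(2*(Λ:ℝ)+2))^2/2 = Real.pi^2/(8*((Λ:ℝ)+1)^2) := by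
        have hne : ((Λ:ℝ)+1) ≠ 0 := by positivity
        field_simp
        ring
      rw [heq] at h3
      linarith
    linarith
  refine ⟨lower, ?_⟩
  have upper : ∀ Λ : ℕ, 0 < Λ → α₁ Λ ≤ Real.sqrt (1 + 1/((Λ:ℝ)*((Λ:ℝ)+1))) :=
    fun Λ hΛ => alpha_upper Λ hΛ (hk Λ) (hα₁ Λ hΛ)
  have hL : Filter.Tendsto (fun Λ : ℕ => 1 - Real.pi^2/(8*((Λ:ℝ)+1)^2))
      Filter.atTop (nhds 1) := by
    have hd : Filter.Tendsto (fun Λ : ℕ => 8*((Λ:ℝ)+1)^2) Filter.atTop Filter.atTop := by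
      apply Filter.tendsto_atTop_mono (f := fun Λ : ℕ => (Λ:ℝ))
      · intro n; nlinarith [Nat.cast_nonneg (α := ℝ) n]
      · exact tendsto_natCast_atTop_atTop
    have h0 : Filter.Tendsto (fun Λ : ℕ => Real.pi^2/(8*((Λ:ℝ)+1)^2))
        Filter.atTop (nhds 0) := Filter.Tendsto.div_atTop tendsto_const_nhds hd
    simpa using (tendsto_const_nhds (x := (1:ℝ))).sub h0
  have hR : Filter.Tendsto (fun Λ : ℕ => Real.sqrt (1 + 1/((Λ:ℝ)*((Λ:ℝ)+1))))
      Filter.atTop (nhds 1) := by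
    have hd : Filter.Tendsto (fun Λ : ℕ => (Λ:ℝ)*((Λ:ℝ)+1)) Filter.atTop Filter.atTop := by
      apply Filter.tendsto_atTop_mono (f := fun Λ : ℕ => (Λ:ℝ))
      · intro n; nlinarith [Nat.cast_nonneg (α := ℝ) n]
      · exact tendsto_natCast_atTop_atTop
    have h0 : Filter.Tendsto (fun Λ : ℕ => 1 + 1/((Λ:ℝ)*((Λ:ℝ)+1)))
        Filter.atTop (nhds (1:ℝ)) := by
      have h1 : Filter.Tendsto (fun Λ : ℕ => 1/((Λ:ℝ)*((Λ:ℝ)+1)))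
          Filter.atTop (nhds 0) := Filter.Tendsto.div_atTop tendsto_const_nhds hd
      have h2 := (tendsto_const_nhds (x := (1:ℝ))).add h1
      rw [add_zero] at h2
      exact h2
    have h1 := (Real.continuous_sqrt.tendsto 1).comp h0
    simpa [Function.comp_def] using h1
  apply tendsto_of_tendsto_of_tendsto_of_le_of_le' hL hR
  · filter_upwards [Filter.eventually_ge_atTop 1] with Λ hΛ using lower Λ hΛ
  · filter_upwards [Filter.eventually_ge_atTop 1] with Λ hΛ using upper Λ hΛ
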